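/- arXiv:2203.06166 — 2 statements merged into one kernel-verified Lean document; each statement's English description precedes it below -/
import Mathlib

section
/- C_2 <_W C_{#≤2}, C_{#≤2} ≰_W C_ℕ, and C_3 ≰_W C_{#≤2}: closed choice on the two-element space is strictly continuously Weihrauch below closed choice on Cantor space restricted to sets with at most two elements; the latter is not continuously Weihrauch reducible to closed choice on the natural numbers; and closed choice on the three-element space is not continuously Weihrauch reducible to C_{#≤2}. -/
open Filter Topology

abbrev Baire : Type := ℕ → ℕ

/-- The pairing `⟨p,q⟩(2n) = p(n)`, `⟨p,q⟩(2n+1) = q(n)`. -/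
def pairB (p q : Baire) : Baire := fun n => if n % 2 = 0 then p (n / 2) else q (n / 2)

/-- A problem: a partial multivalued function on Baire space. -/
structure Problem where
  dom : Set Baire
  sol : Baire → Set Baire

/-- Continuous Weihrauch reducibility. -/
def WRed (f g : Problem) : Prop :=
  ∃ (Kd Hd : Set Baire) (K H : Baire → Baire),
    ContinuousOn K Kd ∧ ContinuousOn H Hd ∧
      ∀ p ∈ f.dom, p ∈ Kd ∧ K p ∈ g.dom ∧
        ∀ q ∈ g.sol (K p), pairB p q ∈ Hd ∧ H (pairB p q) ∈ f.sol p

/-- Strong continuous Weihrauch reducibility. -/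
def SWRed (f g : Problem) : Prop :=
  ∃ (Kd Hd : Set Baire) (K H : Baire → Baire),
    ContinuousOn K Kd ∧ ContinuousOn H Hd ∧
      ∀ p ∈ f.dom, p ∈ Kd ∧ K p ∈ g.dom ∧
        ∀ q ∈ g.sol (K p), q ∈ Hd ∧ H q ∈ f.sol p

def WEquiv (f g : Problem) : Prop := WRed f g ∧ WRed g f
def SWEquiv (f g : Problem) : Prop := SWRed f g ∧ SWRed g f
def WLt (f g : Problem) : Prop := WRed f g ∧ ¬ WRed g f

/-- `range(p-1)`. -/
def rangeM (p : Baire) : Set ℕ := {n | ∃ i, p i = n + 1}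

/-- Characteristic function of a set of naturals. -/
noncomputable def chi (A : Set ℕ) : Baire := A.indicator fun _ => 1

noncomputable def EC : Problem where
  dom := Set.univ
  sol := fun p => {chi (rangeM p)}

noncomputable def EC1 : Problem where
  dom := {p | ((rangeM p)ᶜ).encard ≤ 1}
  sol := fun p => {chi (rangeM p)}

def pfst (r : Baire) : Baire := fun n => r (2 * n)
def psnd (r : Baire) : Baire := fun n => r (2 * n + 1)

noncomputable def SEP : Problem where
  dom := {r | rangeM (pfst r) ∩ rangeM (psnd r) = ∅}
  sol := fun r =>
    {s | ∃ A : Set ℕ, s = chi A ∧ rangeM (pfst r) ⊆ A ∧ A ⊆ (rangeM (psnd r))ᶜ}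

noncomputable def SEP1 : Problem where
  dom := {r | rangeM (pfst r) ∩ rangeM (psnd r) = ∅ ∧
    ((rangeM (pfst r) ∪ rangeM (psnd r))ᶜ).encard ≤ 1}
  sol := SEP.sol

/- rationals -/
def ratEnum (i : ℕ) : ℚ :=
  ((i.unpair.1 : ℚ) - (i.unpair.2.unpair.1 : ℚ)) / ((i.unpair.2.unpair.2 : ℚ) + 1)

def rhoCauchy (p : Baire) (x : ℝ) : Prop :=
  ∀ n, |(ratEnum (p n) : ℝ) - x| ≤ (2 : ℝ) ^ (-(n : ℤ))

def rhoNaive (p : Baire) (x : ℝ) : Prop :=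
  Tendsto (fun n => ((ratEnum (p n) : ℝ))) atTop (nhds x)

def rhoLt (p : Baire) (x : ℝ) : Prop := rangeM p = {n | (ratEnum n : ℝ) < x}
def rhoGt (p : Baire) (x : ℝ) : Prop := rangeM p = {n | x < (ratEnum n : ℝ)}

def rhoCfLt (p : Baire) (x : ℝ) : Prop :=
  (∀ n, p n ≤ 1) ∧ ∀ n, (p n = 1 ↔ (ratEnum n : ℝ) < x)
def rhoCfGt (p : Baire) (x : ℝ) : Prop :=
  (∀ n, p n ≤ 1) ∧ ∀ n, (p n = 1 ↔ x < (ratEnum n : ℝ))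

noncomputable def cfTail : List ℕ → ℝ
  | [] => 0
  | b :: l => 1 / ((b : ℝ) + cfTail l)

noncomputable def cfApprox (p : Baire) (k : ℕ) : ℝ :=
  ((Denumerable.ofNat ℤ (p 0) : ℤ) : ℝ) + cfTail ((List.range k).map fun i => p (i + 1))

def rhoCf (p : Baire) (x : ℝ) : Prop :=
  ((∀ i, 1 ≤ i → 1 ≤ p i) ∧ Tendsto (cfApprox p) atTop (nhds x)) ∨
    (∃ k, 1 ≤ k ∧ p k = 0 ∧ (∀ i, 1 ≤ i → i < k → 1 ≤ p i) ∧
      (2 ≤ k → 2 ≤ p (k - 1)) ∧ x = cfApprox p (k - 1))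

def rhoDec (p : Baire) (x : ℝ) : Prop :=
  (∀ n, 1 ≤ n → p n ≤ 9) ∧
    x = ((Denumerable.ofNat ℤ (p 0) : ℤ) : ℝ) + ∑' n : ℕ, (p (n + 1) : ℝ) / 10 ^ (n + 1)

/-- The implication problem between two representations of ℝ. -/
def implProblem (d1 d2 : Baire → ℝ → Prop) : Problem where
  dom := {p | ∃ x, d1 p x}
  sol := fun p => {q | ∃ x, d1 p x ∧ d2 q x}

/- trees / WKL / choice on Cantor space -/
def wordCode : List Bool → ℕ
  | [] => 0
  | b :: w => 2 * wordCode w + (if b then 2 else 1)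

def prefixList (x : Baire) (k : ℕ) : List Bool := (List.range k).map fun i => decide (x i = 1)

def isTreeCode (t : Baire) : Prop :=
  (∀ n, t n ≤ 1) ∧
    ∀ w v : List Bool, w <+: v → t (wordCode v) = 1 → t (wordCode w) = 1

def WKL : Problem where
  dom := {t | isTreeCode t ∧ {w : List Bool | t (wordCode w) = 1}.Infinite}
  sol := fun t => {x | (∀ n, x n ≤ 1) ∧ ∀ k, t (wordCode (prefixList x k)) = 1}

def Ap (p : Baire) : Set Baire :=
  {x | (∀ n, x n ≤ 1) ∧ ∀ k, wordCode (prefixList x k) ∉ rangeM p}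

def CCantor : Problem where
  dom := {p | (Ap p).Nonempty}
  sol := Ap

def Cle2 : Problem where
  dom := {p | (Ap p).Nonempty ∧ (Ap p).encard ≤ 2}
  sol := Ap

/- limit and parallelization -/
def projCount (r : Baire) (n : ℕ) : Baire := fun k => r (Nat.pair n k)

def limP : Problem where
  dom := {r | ∃ q : Baire, ∀ k, Tendsto (fun n => projCount r n k) atTop (nhds (q k))}
  sol := fun r => {q | ∀ k, Tendsto (fun n => projCount r n k) atTop (nhds (q k))}

def parallel (f : Problem) : Problem where
  dom := {r | ∀ n, projCount r n ∈ f.dom}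
  sol := fun r => {s | ∀ n, projCount s n ∈ f.sol (projCount r n)}

def MCT : Problem where
  dom := {r | ∃ xs : ℕ → ℝ, (∀ n, rhoCauchy (projCount r n) (xs n)) ∧
    Monotone xs ∧ BddAbove (Set.range xs)}
  sol := fun r => {q | ∃ xs : ℕ → ℝ, (∀ n, rhoCauchy (projCount r n) (xs n)) ∧
    Monotone xs ∧ BddAbove (Set.range xs) ∧ rhoCauchy q (⨆ n, xs n)}

/- SORT and RAT -/
open Classical in
noncomputable def sortOut (p : Baire) : Baire := fun k =>
  if {i | p i = 0}.Infinite then 0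
  else if k < {i | p i = 0}.ncard then 0 else 1

noncomputable def SORT : Problem where
  dom := {p | ∀ n, p n ≤ 1}
  sol := fun p => {sortOut p}

def znk (n : ℕ) : Baire := fun k => if k < n then 0 else 1

def RAT : Problem where
  dom := {p | ∃ x, rhoCauchy p x}
  sol := fun p => {s | ∃ x, rhoCauchy p x ∧
    ((∃ n, x = (ratEnum n : ℝ) ∧ s = znk n) ∨
      ((∀ r : ℚ, x ≠ (r : ℝ)) ∧ s = fun _ => 0))}

/- omniscience principles -/
def projFin (m i : ℕ) (r : Baire) : Baire := fun k => r (m * k + i - 1)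
def isZeroSeq (p : Baire) : Prop := ∀ k, p k = 0
def constSeq (i : ℕ) : Baire := fun _ => i

noncomputable def LPOn (n : ℕ) : Problem where
  dom := Set.univ
  sol := fun r => {constSeq ({i | 1 ≤ i ∧ i ≤ n ∧ isZeroSeq (projFin n i r)}.ncard)}

def LLPOn (n : ℕ) : Problem where
  dom := {r | {i | 1 ≤ i ∧ i ≤ n ∧ ¬ isZeroSeq (projFin n i r)}.encard ≤ 1}
  sol := fun r => {s | ∃ i, 1 ≤ i ∧ i ≤ n ∧ isZeroSeq (projFin n i r) ∧ s = constSeq i}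

def MLPOn (n : ℕ) : Problem where
  dom := {r | ∃ i, 1 ≤ i ∧ i ≤ n ∧ isZeroSeq (projFin n i r)}
  sol := fun r => {s | ∃ i, 1 ≤ i ∧ i ≤ n ∧ isZeroSeq (projFin n i r) ∧ s = constSeq i}

def LPO : Problem where
  dom := Set.univ
  sol := fun p => {s | (isZeroSeq p ∧ s = constSeq 1) ∨ (¬ isZeroSeq p ∧ s = constSeq 0)}

/- choice problems on ℕ etc. -/
def Cfin (n : ℕ) : Problem where
  dom := {p | ∃ i, i < n ∧ i ∉ rangeM p}
  sol := fun p => {s | ∃ i, i < n ∧ i ∉ rangeM p ∧ s = constSeq i}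

def ACCfin (n : ℕ) : Problem where
  dom := {p | (∃ i, i < n ∧ i ∉ rangeM p) ∧ ({i | i < n} ∩ rangeM p).encard ≤ 1}
  sol := (Cfin n).sol

def CNat : Problem where
  dom := {p | ∃ i, i ∉ rangeM p}
  sol := fun p => {s | ∃ i, i ∉ rangeM p ∧ s = constSeq i}

/- differentiation -/
instance : Countable (AddMonoidAlgebra ℚ ℕ) :=
  AddMonoidAlgebra.coeff_injective.countable

instance : Countable (Polynomial ℚ) :=
  Polynomial.toFinsupp_injective.countable

noncomputable def polyEnum : ℕ → Polynomial ℚ :=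
  (exists_surjective_nat (Polynomial ℚ)).choose

noncomputable def polyFun (k : ℕ) : C(Set.Icc (0:ℝ) 1, ℝ) :=
  ⟨fun x => ((polyEnum k).map (algebraMap ℚ ℝ)).eval (x : ℝ),
   (((polyEnum k).map (algebraMap ℚ ℝ)).continuous).comp continuous_subtype_val⟩

noncomputable def deltaC (p : Baire) (f : C(Set.Icc (0:ℝ) 1, ℝ)) : Prop :=
  ∀ n, ‖f - polyFun (p n)‖ ≤ (2 : ℝ) ^ (-(n : ℤ))

def IsDerivOn (f g : C(Set.Icc (0:ℝ) 1, ℝ)) : Prop :=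
  ∀ x : Set.Icc (0:ℝ) 1,
    HasDerivWithinAt (Set.IccExtend (by norm_num : (0:ℝ) ≤ 1) f) (g x) (Set.Icc 0 1) (x : ℝ)

noncomputable def diffP : Problem where
  dom := {p | ∃ f g, deltaC p f ∧ IsDerivOn f g}
  sol := fun p => {q | ∃ f g, deltaC p f ∧ IsDerivOn f g ∧ deltaC q g}



-- ===================== auxiliary development =====================

-- ============ infra (already checked) ============
section Infra
variable {α β : Type*} [TopologicalSpace α] [DiscreteTopology α]

lemma pairB_even (p q : Baire) (n : ℕ) : pairB p q (2 * n) = p n := by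
  simp [pairB, Nat.mul_div_cancel_left, Nat.mul_mod_right]

lemma pairB_odd (p q : Baire) (n : ℕ) : pairB p q (2 * n + 1) = q n := by
  have h1 : (2 * n + 1) % 2 = 1 := by omega
  have h2 : (2 * n + 1) / 2 = n := by omega
  simp [pairB, h1, h2]

lemma isOpen_cylinder (x : ℕ → α) (k : ℕ) : IsOpen {y : ℕ → α | ∀ i < k, y i = x i} := by
  have : {y : ℕ → α | ∀ i < k, y i = x i} =
      Set.pi {i | i < k} (fun i => {x i}) := by
    ext y; simp [Set.mem_pi]
  rw [this]
  exact isOpen_set_pi (Set.finite_Iio k) (fun a _ => isOpen_discrete _)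

lemma isOpen_determined {S : Set (ℕ → α)} (k : ℕ)
    (h : ∀ x ∈ S, ∀ y, (∀ i < k, y i = x i) → y ∈ S) : IsOpen S := by
  have : S = ⋃ x ∈ S, {y : ℕ → α | ∀ i < k, y i = x i} := by
    ext y; simp only [Set.mem_iUnion]
    exact ⟨fun hy => ⟨y, hy, fun i _ => rfl⟩, fun ⟨x, hx, hagree⟩ => h x hx y hagree⟩
  rw [this]
  exact isOpen_biUnion (fun x _ => isOpen_cylinder x k)

omit [DiscreteTopology α] in
lemma exists_cylinder {U : Set (ℕ → α)} (hU : IsOpen U) {x : ℕ → α} (hx : x ∈ U) :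
    ∃ k, ∀ y, (∀ i < k, y i = x i) → y ∈ U := by
  obtain ⟨I, u, hu, hsub⟩ := isOpen_pi_iff.1 hU x hx
  refine ⟨(I.sup id) + 1, fun y hy => hsub ?_⟩
  intro i hi
  rw [hy i (by have := Finset.le_sup (f := id) hi; simp only [id] at this; omega)]
  exact (hu i hi).2

lemma cylinder_mem_nhds (x : ℕ → α) (k : ℕ) : {y : ℕ → α | ∀ i < k, y i = x i} ∈ 𝓝 x :=
  (isOpen_cylinder x k).mem_nhds (fun _ _ => rfl)

lemma continuous_determined [TopologicalSpace β] {F : (ℕ → α) → β}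
    (h : ∀ x, ∃ k, ∀ y, (∀ i < k, y i = x i) → F y = F x) : Continuous F := by
  rw [continuous_iff_continuousAt]
  intro x
  obtain ⟨k, hk⟩ := h x
  have hev : (fun _ : ℕ → α => F x) =ᶠ[𝓝 x] F :=
    Filter.eventually_of_mem (cylinder_mem_nhds x k) (fun y hy => (hk y hy).symm)
  exact tendsto_const_nhds.congr' hev

variable [TopologicalSpace β] [DiscreteTopology β]

lemma continuousOn_modulus {F : (ℕ → α) → (ℕ → β)} {D : Set (ℕ → α)}
    (hF : ContinuousOn F D) {p : ℕ → α} (hp : p ∈ D) (M : ℕ) :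
    ∃ k, ∀ q ∈ D, (∀ i < k, q i = p i) → ∀ m < M, F q m = F p m := by
  induction M with
  | zero => exact ⟨0, fun q _ _ m hm => absurd hm (by omega)⟩
  | succ M ih =>
    obtain ⟨k₁, hk₁⟩ := ih
    have hV : IsOpen {r : ℕ → β | r M = F p M} := by
      refine isOpen_determined (M + 1) (fun x hx y hy => ?_)
      simp only [Set.mem_setOf_eq] at hx ⊢
      rw [hy M (by omega), hx]
    have hmem : F ⁻¹' {r : ℕ → β | r M = F p M} ∈ 𝓝[D] p :=
      hF p hp (hV.mem_nhds (by simp))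
    obtain ⟨U, hUo, hpU, hUsub⟩ := mem_nhdsWithin.1 hmem
    obtain ⟨k₂, hk₂⟩ := exists_cylinder hUo hpU
    refine ⟨max k₁ k₂, fun q hq hagree m hm => ?_⟩
    rcases Nat.lt_or_ge m M with h | h
    · exact hk₁ q hq (fun i hi => hagree i (lt_of_lt_of_le hi (le_max_left _ _))) m h
    · have hmM : m = M := by omega
      subst hmM
      exact hUsub ⟨hk₂ q (fun i hi => hagree i (lt_of_lt_of_le hi (le_max_right _ _))), hq⟩

end Infra

lemma wordCode_injective : Function.Injective wordCode := by
  intro w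
  induction w with
  | nil =>
    intro v hv
    cases v with
    | nil => rfl
    | cons b v => simp only [wordCode] at hv; split at hv <;> omega
  | cons b w ih =>
    intro v hv
    cases v with
    | nil => simp only [wordCode] at hv; split at hv <;> omega
    | cons c v =>
      simp only [wordCode] at hv
      have hbc : b = c ∧ wordCode w = wordCode v := by
        cases b <;> cases c <;> simp_all <;> omega
      rw [hbc.1, ih hbc.2]

-- ============ basic facts ============

lemma pfst_pairB (p q : Baire) : (fun n => pairB p q (2 * n)) = p := funext (pairB_even p q)

lemma prefixList_length (x : Baire) (k : ℕ) : (prefixList x k).length = k := by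
  simp [prefixList]

lemma prefixList_succ (x : Baire) (k : ℕ) :
    prefixList x (k + 1) = prefixList x k ++ [decide (x k = 1)] := by
  simp [prefixList, List.range_succ]

lemma prefixList_const (x : Baire) (k : ℕ) (h : ∀ i < k, x i = x 0) :
    prefixList x k = List.replicate k (decide (x 0 = 1)) := by
  rw [List.eq_replicate_iff]
  refine ⟨prefixList_length x k, fun b hb => ?_⟩
  simp only [prefixList, List.mem_map, List.mem_range] at hb
  obtain ⟨i, hi, rfl⟩ := hb
  rw [h i hi]

lemma constSeq_mem_Cfin_sol {n i : ℕ} {p : Baire} (h1 : i < n) (h2 : i ∉ rangeM p) :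
    constSeq i ∈ (Cfin n).sol p := ⟨i, h1, h2, rfl⟩

-- ============ Construction A : Cfin 2 ≤ Cle2 ============

def killA (p : Baire) : Baire := fun n =>
  if n.unpair.2 = 0 then wordCode (List.replicate (n.unpair.1 + 1) false ++ [true]) + 1
  else if n.unpair.2 = 1 then wordCode (List.replicate (n.unpair.1 + 1) true ++ [false]) + 1
  else if p n.unpair.1 = 1 then wordCode (List.replicate (n.unpair.2 - 1) false) + 1
  else if p n.unpair.1 = 2 then wordCode (List.replicate (n.unpair.2 - 1) true) + 1
  else 0

lemma rangeM_killA {p : Baire} {n : ℕ} : n ∈ rangeM (killA p) ↔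
    (∃ k, n = wordCode (List.replicate (k + 1) false ++ [true])) ∨
    (∃ k, n = wordCode (List.replicate (k + 1) true ++ [false])) ∨
    (∃ m, 1 ≤ m ∧ n = wordCode (List.replicate m false) ∧ 0 ∈ rangeM p) ∨
    (∃ m, 1 ≤ m ∧ n = wordCode (List.replicate m true) ∧ 1 ∈ rangeM p) := by
  constructor
  · rintro ⟨i, hi⟩
    simp only [killA] at hi
    split_ifs at hi with h1 h2 h3 h4
    · exact Or.inl ⟨i.unpair.1, by omega⟩
    · exact Or.inr (Or.inl ⟨i.unpair.1, by omega⟩)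
    · exact Or.inr (Or.inr (Or.inl ⟨i.unpair.2 - 1, by omega, by omega, ⟨i.unpair.1, h3⟩⟩))
    · exact Or.inr (Or.inr (Or.inr ⟨i.unpair.2 - 1, by omega, by omega, ⟨i.unpair.1, h4⟩⟩))
    all_goals omega
  · rintro (⟨k, rfl⟩ | ⟨k, rfl⟩ | ⟨m, hm, rfl, i', hi'⟩ | ⟨m, hm, rfl, i', hi'⟩)
    · exact ⟨Nat.pair k 0, by simp [killA]⟩
    · exact ⟨Nat.pair k 1, by simp [killA]⟩
    · refine ⟨Nat.pair i' (m + 1), ?_⟩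
      simp only [killA, Nat.unpair_pair]
      rw [if_neg (by omega), if_neg (by omega), if_pos hi']
      simp
    · refine ⟨Nat.pair i' (m + 1), ?_⟩
      simp only [killA, Nat.unpair_pair]
      rw [if_neg (by omega), if_neg (by omega)]
      have : p i' ≠ 1 := by omega
      rw [if_neg this, if_pos hi']
      simp

lemma replicate_ne_snoc {b c d : Bool} {k m : ℕ} (hm : 1 ≤ m) (hcd : c ≠ d) :
    List.replicate k b ≠ List.replicate m c ++ [d] := by
  intro h
  have hc : c ∈ List.replicate k b := by
    rw [h]; exact List.mem_append_left _ (List.mem_replicate.2 ⟨by omega, rfl⟩)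
  have hd : d ∈ List.replicate k b := by
    rw [h]; exact List.mem_append_right _ (List.mem_singleton.2 rfl)
  rw [List.eq_of_mem_replicate hc] at hcd
  rw [List.eq_of_mem_replicate hd] at hcd
  exact hcd rfl

lemma Ap_killA (p : Baire) :
    Ap (killA p) = {x | ∃ i, i < 2 ∧ i ∉ rangeM p ∧ x = constSeq i} := by
  ext x
  constructor
  · rintro ⟨hle, hpre⟩
    -- x is constant
    have hconst : ∀ n, x n = x 0 := by
      by_contra hnc
      push_neg at hnc
      have hex : ∃ n, x n ≠ x 0 := hnc
      set k := Nat.find hex with hk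
      have hkne : x k ≠ x 0 := Nat.find_spec hex
      have hklt : ∀ i < k, x i = x 0 := fun i hi => by
        have := Nat.find_min hex hi; simpa using this
      have hk1 : 1 ≤ k := by
        rcases Nat.eq_zero_or_pos k with h | h
        · exact absurd (h ▸ rfl) hkne
        · exact h
      have hsplit : prefixList x (k + 1) =
          List.replicate k (decide (x 0 = 1)) ++ [decide (x k = 1)] := by
        rw [prefixList_succ, prefixList_const x k hklt]
      have hdk : decide (x k = 1) = !(decide (x 0 = 1)) := by
        have h0 : x 0 ≤ 1 := hle 0
        have hkk : x k ≤ 1 := hle k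
        rcases (by omega : x 0 = 0 ∧ x k = 1 ∨ x 0 = 1 ∧ x k = 0) with ⟨ha, hb⟩ | ⟨ha, hb⟩ <;>
          simp [ha, hb]
      apply hpre (k + 1)
      rw [hsplit, hdk]
      rcases Bool.eq_false_or_eq_true (decide (x 0 = 1)) with hb | hb
      · rw [hb]
        simp only [Bool.not_true]
        exact rangeM_killA.2 (Or.inr (Or.inl ⟨k - 1, by rw [show k - 1 + 1 = k by omega]⟩))
      · rw [hb]
        simp only [Bool.not_false]
        exact rangeM_killA.2 (Or.inl ⟨k - 1, by rw [show k - 1 + 1 = k by omega]⟩)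
    refine ⟨x 0, by have := hle 0; omega, ?_, funext fun n => hconst n⟩
    -- x 0 ∉ rangeM p
    intro hmem
    apply hpre 1
    have h1 : prefixList x 1 = List.replicate 1 (decide (x 0 = 1)) :=
      prefixList_const x 1 (fun i hi => by rw [show i = 0 by omega])
    rw [h1]
    have h0 : x 0 ≤ 1 := hle 0
    interval_cases h0' : x 0
    · simp only [show decide ((0:ℕ) = 1) = false by simp]
      exact rangeM_killA.2 (Or.inr (Or.inr (Or.inl ⟨1, le_refl _, rfl, hmem⟩)))
    · simp only [show decide ((1:ℕ) = 1) = true by simp]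
      exact rangeM_killA.2 (Or.inr (Or.inr (Or.inr ⟨1, le_refl _, rfl, hmem⟩)))
  · rintro ⟨i, hi2, hir, rfl⟩
    refine ⟨fun n => by simp [constSeq]; omega, fun k => ?_⟩
    have hpl : prefixList (constSeq i) k = List.replicate k (decide (i = 1)) :=
      prefixList_const (constSeq i) k (fun _ _ => rfl)
    rw [hpl]
    intro hmem
    rcases rangeM_killA.1 hmem with ⟨k', hk'⟩ | ⟨k', hk'⟩ | ⟨m, hm, heq, hmem0⟩ | ⟨m, hm, heq, hmem1⟩
    · exact replicate_ne_snoc (b := decide (i = 1)) (by omega) (by simp) (wordCode_injective hk')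
    · exact replicate_ne_snoc (b := decide (i = 1)) (by omega) (by simp) (wordCode_injective hk')
    · have := wordCode_injective heq
      have hb : decide (i = 1) = false := by
        have hmem2 : (false : Bool) ∈ List.replicate k (decide (i = 1)) := by
          rw [this]; exact List.mem_replicate.2 ⟨by omega, rfl⟩
        exact (List.eq_of_mem_replicate hmem2).symm
      have : i = 0 := by simp at hb; omega
      exact hir (this ▸ hmem0)
    · have := wordCode_injective heq
      have hb : decide (i = 1) = true := by
        have hmem2 : (true : Bool) ∈ List.replicate k (decide (i = 1)) := by
          rw [this]; exact List.mem_replicate.2 ⟨by omega, rfl⟩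
        exact (List.eq_of_mem_replicate hmem2).symm
      have : i = 1 := by simpa using hb
      exact hir (this ▸ hmem1)

lemma wred_C2_Cle2 : WRed (Cfin 2) Cle2 := by
  refine ⟨Set.univ, Set.univ, killA, fun r => constSeq (r 1), ?_, ?_, ?_⟩
  · apply Continuous.continuousOn
    apply continuous_pi
    intro n
    apply continuous_determined
    intro x
    refine ⟨n.unpair.1 + 1, fun y hy => ?_⟩
    simp only [killA, hy n.unpair.1 (by omega)]
  · apply Continuous.continuousOn
    apply continuous_pi
    intro n
    apply continuous_determined
    intro x
    exact ⟨2, fun y hy => by simp [hy 1 (by omega)]⟩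
  · rintro p ⟨i, hi2, hir⟩
    refine ⟨trivial, ⟨⟨constSeq i, ?_⟩, ?_⟩, ?_⟩
    · rw [Ap_killA]; exact ⟨i, hi2, hir, rfl⟩
    · rw [Ap_killA]
      have hsub : {x | ∃ i, i < 2 ∧ i ∉ rangeM p ∧ x = constSeq i} ⊆
          {constSeq 0, constSeq 1} := by
        rintro x ⟨j, hj2, _, rfl⟩
        interval_cases j
        · exact Or.inl rfl
        · exact Or.inr rfl
      calc Set.encard {x | ∃ i, i < 2 ∧ i ∉ rangeM p ∧ x = constSeq i}
          ≤ Set.encard {constSeq 0, constSeq 1} := Set.encard_le_encard hsub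
        _ ≤ Set.encard {constSeq 1} + 1 := Set.encard_insert_le _ _
        _ ≤ 2 := by rw [Set.encard_singleton]; norm_num
    · intro q hq
      rw [show Cle2.sol (killA p) = Ap (killA p) from rfl, Ap_killA] at hq
      obtain ⟨j, hj2, hjr, rfl⟩ := hq
      refine ⟨trivial, ?_⟩
      have hpb : pairB p (constSeq j) 1 = j := by
        have := pairB_odd p (constSeq j) 0
        simpa [constSeq] using this
      show constSeq (pairB p (constSeq j) 1) ∈ (Cfin 2).sol p
      rw [hpb]
      exact constSeq_mem_Cfin_sol hj2 hjr

-- ============ Construction B : Cfin 2 ≤ CNat ============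

def killB (p : Baire) : Baire := fun n =>
  if n.unpair.2 = 0 then n.unpair.1 + 3
  else if p n.unpair.1 = 1 ∨ p n.unpair.1 = 2 then p n.unpair.1 else 0

lemma rangeM_killB {p : Baire} {n : ℕ} :
    n ∈ rangeM (killB p) ↔ 2 ≤ n ∨ (n < 2 ∧ n ∈ rangeM p) := by
  constructor
  · rintro ⟨i, hi⟩
    simp only [killB] at hi
    split_ifs at hi with h1 h2
    · omega
    · exact Or.inr ⟨by omega, ⟨i.unpair.1, hi⟩⟩
    all_goals omega
  · rintro (h | ⟨h2, i', hi'⟩)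
    · refine ⟨Nat.pair (n - 2) 0, ?_⟩
      simp only [killB, Nat.unpair_pair, if_true]
      omega
    · refine ⟨Nat.pair i' 1, ?_⟩
      simp only [killB, Nat.unpair_pair]
      rw [if_neg (by omega), if_pos (by omega)]
      exact hi'

lemma wred_C2_CNat : WRed (Cfin 2) CNat := by
  refine ⟨Set.univ, Set.univ, killB, fun r => constSeq (r 1), ?_, ?_, ?_⟩
  · apply Continuous.continuousOn
    apply continuous_pi
    intro n
    apply continuous_determined
    intro x
    refine ⟨n.unpair.1 + 1, fun y hy => ?_⟩
    simp only [killB, hy n.unpair.1 (by omega)]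
  · apply Continuous.continuousOn
    apply continuous_pi
    intro n
    apply continuous_determined
    intro x
    exact ⟨2, fun y hy => by simp [hy 1 (by omega)]⟩
  · rintro p ⟨i, hi2, hir⟩
    refine ⟨trivial, ⟨i, ?_⟩, ?_⟩
    · intro hmem
      rcases rangeM_killB.1 hmem with h | ⟨_, h⟩
      · omega
      · exact hir h
    · rintro q ⟨j, hjr, rfl⟩
      have hj2 : j < 2 := by
        by_contra h
        exact hjr (rangeM_killB.2 (Or.inl (by omega)))
      have hjp : j ∉ rangeM p := fun h => hjr (rangeM_killB.2 (Or.inr ⟨hj2, h⟩))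
      refine ⟨trivial, ?_⟩
      have hpb : pairB p (constSeq j) 1 = j := by
        have := pairB_odd p (constSeq j) 0
        simpa [constSeq] using this
      show constSeq (pairB p (constSeq j) 1) ∈ (Cfin 2).sol p
      rw [hpb]
      exact constSeq_mem_Cfin_sol hj2 hjp

-- ============ transitivity ============

lemma continuousOn_apply_comp {F : Baire → Baire} {s : Set Baire} (m : ℕ)
    (hF : ContinuousOn F s) : ContinuousOn (fun r => F r m) s :=
  (continuous_apply m).comp_continuousOn hF

lemma ContinuousOn.pairB' {F G : Baire → Baire} {s : Set Baire}
    (hF : ContinuousOn F s) (hG : ContinuousOn G s) :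
    ContinuousOn (fun r => pairB (F r) (G r)) s := by
  have : ∀ n, ContinuousOn (fun r => pairB (F r) (G r) n) s := by
    intro n
    by_cases h : n % 2 = 0
    · simpa [pairB, h] using continuousOn_apply_comp (n / 2) hF
    · simpa [pairB, h] using continuousOn_apply_comp (n / 2) hG
  exact continuousOn_pi.2 this

lemma continuousOn_pfst {s : Set Baire} : ContinuousOn (fun r : Baire => (fun n => r (2 * n))) s :=
  (continuous_pi (fun n => continuous_apply (2 * n))).continuousOn

lemma continuousOn_psnd {s : Set Baire} :
    ContinuousOn (fun r : Baire => (fun n => r (2 * n + 1))) s :=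
  (continuous_pi (fun n => continuous_apply (2 * n + 1))).continuousOn

lemma wred_trans {f g h : Problem} (h1 : WRed f g) (h2 : WRed g h) : WRed f h := by
  obtain ⟨Kd₁, Hd₁, K₁, H₁, hK₁, hH₁, hred₁⟩ := h1
  obtain ⟨Kd₂, Hd₂, K₂, H₂, hK₂, hH₂, hred₂⟩ := h2
  refine ⟨{p | p ∈ Kd₁ ∧ K₁ p ∈ Kd₂}, 
    {r | (fun n => r (2 * n)) ∈ Kd₁ ∧
      pairB (K₁ (fun n => r (2 * n))) (fun n => r (2 * n + 1)) ∈ Hd₂ ∧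
      pairB (fun n => r (2 * n)) (H₂ (pairB (K₁ (fun n => r (2 * n))) (fun n => r (2 * n + 1)))) ∈ Hd₁},
    fun p => K₂ (K₁ p),
    fun r => H₁ (pairB (fun n => r (2 * n)) (H₂ (pairB (K₁ (fun n => r (2 * n))) (fun n => r (2 * n + 1))))),
    ?_, ?_, ?_⟩
  · exact hK₂.comp (hK₁.mono (fun p hp => hp.1)) (fun p hp => hp.2)
  · have c1 : ContinuousOn (fun r : Baire => K₁ (fun n => r (2 * n)))
        {r : Baire | (fun n => r (2 * n)) ∈ Kd₁ ∧
          pairB (K₁ (fun n => r (2 * n))) (fun n => r (2 * n + 1)) ∈ Hd₂ ∧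
          pairB (fun n => r (2 * n)) (H₂ (pairB (K₁ (fun n => r (2 * n))) (fun n => r (2 * n + 1)))) ∈ Hd₁} :=
      hK₁.comp continuousOn_pfst (fun r hr => hr.1)
    have c2 := ContinuousOn.pairB' c1 continuousOn_psnd
    have c3 := hH₂.comp c2 (fun r hr => hr.2.1)
    have c4 := ContinuousOn.pairB' continuousOn_pfst c3
    exact hH₁.comp c4 (fun r hr => hr.2.2)
  · intro p hp
    obtain ⟨hpK₁, hKp₁, hsol₁⟩ := hred₁ p hp
    obtain ⟨hpK₂, hKp₂, hsol₂⟩ := hred₂ (K₁ p) hKp₁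
    refine ⟨⟨hpK₁, hpK₂⟩, hKp₂, ?_⟩
    intro q hq
    obtain ⟨hq2, hq2'⟩ := hsol₂ q hq
    obtain ⟨hq1, hq1'⟩ := hsol₁ (H₂ (pairB (K₁ p) q)) hq2'
    have e1 : (fun n => pairB p q (2 * n)) = p := pfst_pairB p q
    have e2 : (fun n => pairB p q (2 * n + 1)) = q := funext (pairB_odd p q)
    constructor
    · refine ⟨by rw [e1]; exact hpK₁, by rw [e1, e2]; exact hq2, by rw [e1, e2]; exact hq1⟩
    · show H₁ (pairB (fun n => pairB p q (2 * n))
          (H₂ (pairB (K₁ fun n => pairB p q (2 * n)) fun n => pairB p q (2 * n + 1)))) ∈ f.sol p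
      rw [e1, e2]
      exact hq1'

-- ============ Part E : ¬ WRed (Cfin 3) Cle2 ============

/-- boolization -/
def toBl (x : Baire) : ℕ → Bool := fun i => decide (x i = 1)

lemma prefixList_eq_map (x : Baire) (k : ℕ) :
    prefixList x k = (List.range k).map (toBl x) := rfl

lemma map_range_congr {f g : ℕ → Bool} (k : ℕ) (h : ∀ i < k, f i = g i) :
    (List.range k).map f = (List.range k).map g :=
  List.map_congr_left (fun i hi => h i (List.mem_range.1 hi))

lemma eq_of_toBl_eq {a b : ℕ} (ha : a ≤ 1) (hb : b ≤ 1)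
    (h : decide (a = 1) = decide (b = 1)) : a = b := by
  interval_cases a <;> interval_cases b <;> simp_all

lemma subset_pair_of_encard_le_two {A : Set Baire} {x : Baire} (hx : x ∈ A)
    (h : A.encard ≤ 2) : ∃ y, y ∈ A ∧ A ⊆ {x, y} := by
  by_cases hA : ∃ y ∈ A, y ≠ x
  · obtain ⟨y, hy, hyx⟩ := hA
    refine ⟨y, hy, fun z hz => ?_⟩
    by_contra hzxy
    simp only [Set.mem_insert_iff, Set.mem_singleton_iff, not_or] at hzxy
    have hsub : ({x, y, z} : Set Baire) ⊆ A := by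
      rintro w (rfl | rfl | rfl) <;> assumption
    have h3 : ({x, y, z} : Set Baire).encard = 3 :=
      Set.encard_eq_three.2 ⟨x, y, z, hyx.symm, Ne.symm hzxy.1, Ne.symm hzxy.2, rfl⟩
    have := (h3 ▸ Set.encard_le_encard hsub).trans h
    norm_num at this
  · push_neg at hA
    exact ⟨x, hx, fun z hz => by rw [hA z hz]; exact Or.inl rfl⟩

lemma not_wred_C3_Cle2 : ¬ WRed (Cfin 3) Cle2 := by
  rintro ⟨Kd, Hd, K, H, hK, hH, hred⟩
  set p₀ : Baire := (fun _ => 0) with hp₀def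
  have hp₀dom : p₀ ∈ (Cfin 3).dom := ⟨0, by omega, by rintro ⟨i, hi⟩; simp [hp₀def] at hi⟩
  obtain ⟨hp₀K, hKdom, hsol₀⟩ := hred p₀ hp₀dom
  obtain ⟨⟨x, hx⟩, hcard⟩ := hKdom
  obtain ⟨y, hy, hsubxy⟩ := subset_pair_of_encard_le_two hx hcard
  obtain ⟨hxHd, hxval⟩ := hsol₀ x hx
  obtain ⟨hyHd, hyval⟩ := hsol₀ y hy
  obtain ⟨ix, hix3, -, hxconst⟩ := hxval
  obtain ⟨iy, hiy3, -, hyconst⟩ := hyval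
  obtain ⟨kk, hkk3, hkix, hkiy⟩ : ∃ kk, kk < 3 ∧ kk ≠ ix ∧ kk ≠ iy := by
    by_cases h0 : ix = 0 ∨ iy = 0
    · by_cases h1 : ix = 1 ∨ iy = 1
      · exact ⟨2, by omega, by omega, by omega⟩
      · exact ⟨1, by omega, by omega, by omega⟩
    · exact ⟨0, by omega, by omega, by omega⟩
  -- moduli of H
  obtain ⟨kx, hkx⟩ := continuousOn_modulus hH hxHd 1
  obtain ⟨ky, hky⟩ := continuousOn_modulus hH hyHd 1
  set W : ℕ := max kx ky with hWdef
  have hWkx : kx ≤ W := le_max_left _ _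
  have hWky : ky ≤ W := le_max_right _ _
  -- compactness: find M₀ such that every element of T M₀ agrees with x or y below W
  set E : ℕ → Set ℕ := fun M => {n | ∃ m, m < M ∧ K p₀ m = n + 1} with hEdef
  set T : ℕ → Set (ℕ → Bool) :=
    fun M => {f | ∀ k, wordCode ((List.range k).map f) ∉ E M} with hTdef
  set Wset : Set (ℕ → Bool) :=
    {f | (∀ i < W, f i = toBl x i) ∨ (∀ i < W, f i = toBl y i)} with hWsetdef
  have hTclosed : ∀ M, IsClosed (T M) := by
    intro M
    have : T M = ⋂ k, {f : ℕ → Bool | wordCode ((List.range k).map f) ∈ E M}ᶜ := by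
      ext f; simp [hTdef]
    rw [this]
    refine isClosed_iInter (fun k => IsClosed.mono ?_ (le_refl _))
    refine (isOpen_determined k (fun f hf g hg => ?_)).isClosed_compl
    simp only [Set.mem_setOf_eq] at hf ⊢
    rwa [map_range_congr k hg]
  have hWopen : IsOpen Wset := by
    refine isOpen_determined W (fun f hf g hg => ?_)
    simp only [hWsetdef, Set.mem_setOf_eq] at hf ⊢
    rcases hf with hf | hf
    · exact Or.inl (fun i hi => (hg i hi).trans (hf i hi))
    · exact Or.inr (fun i hi => (hg i hi).trans (hf i hi))
  have hinter : (Set.univ : Set (ℕ → Bool)) ∩ ⋂ M, (T M ∩ Wsetᶜ) = ∅ := by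
    rw [Set.eq_empty_iff_forall_notMem]
    rintro f ⟨-, hf⟩
    simp only [Set.mem_iInter, Set.mem_inter_iff] at hf
    have hfA : (fun n => if f n then 1 else 0) ∈ Ap (K p₀) := by
      refine ⟨fun n => by by_cases hfn : f n <;> simp [hfn], fun k => ?_⟩
      intro ⟨m, hm⟩
      have hpre : prefixList (fun n => if f n then 1 else 0) k = (List.range k).map f := by
        rw [prefixList_eq_map]
        exact map_range_congr k (fun i _ => by cases hfi : f i <;> simp [toBl, hfi])
      exact (hf (m + 1)).1 k ⟨m, by omega, by rw [← hpre]; exact hm⟩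
    have hmem := hsubxy hfA
    have key : ∀ z : Baire, (∀ n, z n ≤ 1) → (fun n => if f n then 1 else 0) = z →
        ∀ i, f i = toBl z i := by
      intro z hz hzeq i
      have := congrFun hzeq i
      simp only [toBl]
      cases hfi : f i <;> simp [hfi] at this <;> simp [← this]
    rcases hmem with hmem | hmem
    · exact (hf 0).2 (Or.inl (fun i _ => key x hx.1 hmem i))
    · exact (hf 0).2 (Or.inr (fun i _ => key y hy.1 hmem i))
  obtain ⟨u, hu⟩ := IsCompact.elim_finite_subfamily_closed isCompact_univ
    (fun M => T M ∩ Wsetᶜ) (fun M => (hTclosed M).inter hWopen.isClosed_compl) hinter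
  set M₀ : ℕ := u.sup id + 1 with hM₀def
  have hTM₀ : T M₀ ⊆ Wset := by
    intro f hf
    by_contra hfW
    have : f ∈ Set.univ ∩ ⋂ M ∈ u, (T M ∩ Wsetᶜ) := by
      refine ⟨trivial, Set.mem_iInter₂.2 (fun M hM => ⟨fun k hk => hf k ?_, hfW⟩)⟩
      obtain ⟨m, hm, hmeq⟩ := hk
      exact ⟨m, by have := Finset.le_sup (f := id) hM; simp only [id] at this; omega, hmeq⟩
    rw [hu] at this
    exact this
  -- modulus of K
  obtain ⟨L, hL⟩ := continuousOn_modulus hK hp₀K M₀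
  set ML : ℕ := max L W with hMLdef
  have hML1 : L ≤ ML := le_max_left _ _
  have hML2 : W ≤ ML := le_max_right _ _
  set p' : Baire := (fun j => if j = ML then ix + 1 else if j = ML + 1 then iy + 1 else 0)
    with hp'def
  have hp'range : ∀ n, n ∈ rangeM p' ↔ n = ix ∨ n = iy := by
    intro n
    constructor
    · rintro ⟨i, hi⟩
      simp only [hp'def] at hi
      split_ifs at hi <;> omega
    · rintro (rfl | rfl)
      · exact ⟨ML, by simp [hp'def]⟩
      · refine ⟨ML + 1, ?_⟩
        simp only [hp'def]
        rw [if_neg (by omega)]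
        simp
  have hp'dom : p' ∈ (Cfin 3).dom :=
    ⟨kk, hkk3, fun h => by rcases (hp'range kk).1 h with h | h <;> omega⟩
  obtain ⟨hp'K, hK'dom, hsol'⟩ := hred p' hp'dom
  obtain ⟨q', hq'⟩ := hK'dom.1
  have hagreeL : ∀ i < L, p' i = p₀ i := by
    intro i hi
    have h1 : i ≠ ML := by omega
    have h2 : i ≠ ML + 1 := by omega
    simp only [hp'def, hp₀def, if_neg h1, if_neg h2]
  have hKmod : ∀ m < M₀, K p' m = K p₀ m := hL p' hp'K hagreeL
  have hq'T : toBl q' ∈ T M₀ := by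
    intro k hk
    obtain ⟨m, hm, hmeq⟩ := hk
    apply hq'.2 k
    rw [prefixList_eq_map]
    exact ⟨m, by rw [hKmod m hm]; exact hmeq⟩
  obtain ⟨hq'Hd, hq'val⟩ := hsol' q' hq'
  obtain ⟨i'', hi''3, hi''r, hi''const⟩ := hq'val
  have hi''ix : i'' ≠ ix := fun h => hi''r ((hp'range i'').2 (Or.inl h))
  have hi''iy : i'' ≠ iy := fun h => hi''r ((hp'range i'').2 (Or.inr h))
  rcases hTM₀ hq'T with hWx | hWx
  · -- q' agrees with x below W
    have hagree : ∀ i < kx, pairB p' q' i = pairB p₀ x i := by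
      intro i hi
      have hiW : i / 2 < W := by omega
      simp only [pairB]
      split
      · have h1 : i / 2 ≠ ML := by omega
        have h2 : i / 2 ≠ ML + 1 := by omega
        simp only [hp₀def, hp'def, if_neg h1, if_neg h2]
      · exact eq_of_toBl_eq (hq'.1 _) (hx.1 _) (hWx (i / 2) hiW)
    have h0 := hkx (pairB p' q') hq'Hd hagree 0 (by omega)
    rw [hi''const, hxconst] at h0
    exact hi''ix h0
  · have hagree : ∀ i < ky, pairB p' q' i = pairB p₀ y i := by
      intro i hi
      have hiW : i / 2 < W := by omega
      simp only [pairB]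
      split
      · have h1 : i / 2 ≠ ML := by omega
        have h2 : i / 2 ≠ ML + 1 := by omega
        simp only [hp₀def, hp'def, if_neg h1, if_neg h2]
      · exact eq_of_toBl_eq (hq'.1 _) (hy.1 _) (hWx (i / 2) hiW)
    have h0 := hky (pairB p' q') hq'Hd hagree 0 (by omega)
    rw [hi''const, hyconst] at h0
    exact hi''iy h0

-- ============ the spine machinery ============

/-- binary words of given length coded by naturals -/
def bitsWord : ℕ → ℕ → List Bool
  | 0, _ => []
  | k + 1, m => (decide (m % 2 = 1)) :: bitsWord k (m / 2)

lemma bitsWord_length (k m : ℕ) : (bitsWord k m).length = k := by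
  induction k generalizing m with
  | zero => rfl
  | succ k ih => simp [bitsWord, ih]

lemma bitsWord_surj (w : List Bool) : ∃ m, bitsWord w.length m = w := by
  induction w with
  | nil => exact ⟨0, rfl⟩
  | cons b w ih =>
    obtain ⟨m, hm⟩ := ih
    refine ⟨2 * m + (if b then 1 else 0), ?_⟩
    simp only [List.length_cons, bitsWord]
    rw [List.cons.injEq]
    refine ⟨?_, ?_⟩
    · cases b <;> simp <;> omega
    · rw [show (2 * m + (if b then 1 else 0)) / 2 = m by cases b <;> simp <;> omega]
      exact hm

/-- the spine -/
def uz (z : ℕ → Bool) : ℕ → List Bool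
  | 0 => []
  | s + 1 => if z (2 * s) then
      uz z s ++ List.replicate (s + 1 - (uz z s).length) (!(z (2 * s + 1)))
    else uz z s

lemma uz_length_le (z : ℕ → Bool) (s : ℕ) : (uz z s).length ≤ s := by
  induction s with
  | zero => simp [uz]
  | succ s ih =>
    rw [show uz z (s+1) = if z (2 * s) then
      uz z s ++ List.replicate (s + 1 - (uz z s).length) (!(z (2 * s + 1)))
    else uz z s from rfl]
    split
    · simp only [List.length_append, List.length_replicate]; omega
    · omega

lemma uz_prefix (z : ℕ → Bool) {s t : ℕ} (h : s ≤ t) : uz z s <+: uz z t := by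
  induction t with
  | zero => rw [Nat.le_zero.1 h]
  | succ t ih =>
    rcases Nat.lt_or_ge s (t + 1) with h' | h'
    · have hp := ih (by omega)
      refine hp.trans ?_
      rw [show uz z (t+1) = if z (2 * t) then
        uz z t ++ List.replicate (t + 1 - (uz z t).length) (!(z (2 * t + 1)))
      else uz z t from rfl]
      split
      · exact List.prefix_append _ _
      · exact List.prefix_refl _
    · rw [show s = t + 1 by omega]

lemma uz_local {z z' : ℕ → Bool} (s : ℕ) (h : ∀ i < 2 * s, z i = z' i) :
    uz z s = uz z' s := by
  induction s with
  | zero => rfl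
  | succ s ih =>
    have hih := ih (fun i hi => h i (by omega))
    rw [show uz z (s+1) = if z (2 * s) then
      uz z s ++ List.replicate (s + 1 - (uz z s).length) (!(z (2 * s + 1)))
    else uz z s from rfl,
      show uz z' (s+1) = if z' (2 * s) then
      uz z' s ++ List.replicate (s + 1 - (uz z' s).length) (!(z' (2 * s + 1)))
    else uz z' s from rfl, hih, h (2 * s) (by omega), h (2 * s + 1) (by omega)]

lemma uz_getElem_eq {z : ℕ → Bool} {s t i : ℕ} (hs : i < (uz z s).length)
    (ht : i < (uz z t).length) : (uz z s)[i] = (uz z t)[i] := by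
  rcases le_total s t with h | h
  · exact (uz_prefix z h).getElem hs
  · exact ((uz_prefix z h).getElem ht).symm

/-- candidate prefixes of length s+1 -/
def cand (z : ℕ → Bool) (s : ℕ) (c : Bool) : List Bool :=
  uz z (s + 1) ++ List.replicate (s + 1 - (uz z (s + 1)).length) c

lemma cand_length (z : ℕ → Bool) (s : ℕ) (c : Bool) : (cand z s c).length = s + 1 := by
  have := uz_length_le z (s + 1)
  simp only [cand, List.length_append, List.length_replicate]
  omega

/-- the input sequence -/
def pz (z : ℕ → Bool) : Baire := fun n =>
  if bitsWord (n.unpair.1 + 1) n.unpair.2 = cand z n.unpair.1 false ∨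
     bitsWord (n.unpair.1 + 1) n.unpair.2 = cand z n.unpair.1 true then 0
  else wordCode (bitsWord (n.unpair.1 + 1) n.unpair.2) + 1

lemma rangeM_pz {z : ℕ → Bool} {n : ℕ} : n ∈ rangeM (pz z) ↔
    ∃ s w, w.length = s + 1 ∧ w ≠ cand z s false ∧ w ≠ cand z s true ∧ n = wordCode w := by
  constructor
  · rintro ⟨i, hi⟩
    simp only [pz] at hi
    split_ifs at hi with h
    push_neg at h
    exact ⟨i.unpair.1, bitsWord (i.unpair.1 + 1) i.unpair.2, bitsWord_length _ _,
      h.1, h.2, by omega⟩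
  · rintro ⟨s, w, hlen, h0, h1, rfl⟩
    obtain ⟨m, hm⟩ := bitsWord_surj w
    rw [hlen] at hm
    refine ⟨Nat.pair s m, ?_⟩
    simp only [pz, Nat.unpair_pair, hm]
    rw [if_neg (by tauto)]

lemma mem_Ap_pz {z : ℕ → Bool} {x : Baire} : x ∈ Ap (pz z) ↔
    (∀ n, x n ≤ 1) ∧ ∀ s, prefixList x (s + 1) = cand z s false ∨
      prefixList x (s + 1) = cand z s true := by
  have hplen : ∀ k, (prefixList x k).length = k := fun k => by simp [prefixList]
  constructor
  · rintro ⟨hle, hpre⟩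
    refine ⟨hle, fun s => ?_⟩
    by_contra hcon
    push_neg at hcon
    exact hpre (s + 1) (rangeM_pz.2 ⟨s, prefixList x (s + 1), hplen _, hcon.1, hcon.2, rfl⟩)
  · rintro ⟨hle, hcand⟩
    refine ⟨hle, fun k => ?_⟩
    intro hmem
    obtain ⟨s, w, hlen, h0, h1, heq⟩ := rangeM_pz.1 hmem
    have hw : w = prefixList x k := wordCode_injective heq.symm
    have hk : k = s + 1 := by rw [hw, hplen] at hlen; omega
    rcases hcand s with h | h
    · exact h0 (by rw [hw, hk, h])
    · exact h1 (by rw [hw, hk, h])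

lemma prefixList_getElem (x : Baire) {k i : ℕ} (hi : i < k) :
    (prefixList x k)[i]'(by simp [prefixList]; omega) = decide (x i = 1) := by
  simp [prefixList]

-- ============ canonical elements ============

lemma take_append_replicate (n : ℕ) (l : List Bool) (c : Bool) (m : ℕ) :
    List.take n (l ++ List.replicate m c) =
      List.take n l ++ List.replicate (min (n - l.length) m) c := by
  rw [List.take_append, List.take_replicate]

/-- truncations of later candidates are earlier candidates -/
lemma compat (z : ℕ → Bool) : ∀ t s, s ≤ t → ∀ c : Bool, ∃ c' : Bool,
    List.take (s + 1) (uz z (t + 1) ++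
      List.replicate (t + 1 - (uz z (t + 1)).length) c) = cand z s c' := by
  intro t
  induction t with
  | zero =>
    intro s hs c
    interval_cases s
    refine ⟨c, ?_⟩
    apply List.take_of_length_le
    have := uz_length_le z (0 + 1)
    simp only [List.length_append, List.length_replicate]
    omega
  | succ t ih =>
    intro s hs c
    rcases Nat.lt_or_ge s (t + 1) with hst | hst
    · -- s ≤ t
      have hst' : s ≤ t := by omega
      have hL1 := uz_length_le z (t + 1)
      rw [show uz z (t + 2) = if z (2 * (t + 1)) then
          uz z (t + 1) ++ List.replicate (t + 2 - (uz z (t + 1)).length) (!(z (2 * (t + 1) + 1)))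
        else uz z (t + 1) from rfl]
      split
      · -- switch at stage t+1
        set b' := !(z (2 * (t + 1) + 1)) with hb'
        have hlen2 : (uz z (t + 1) ++
            List.replicate (t + 2 - (uz z (t + 1)).length) b').length = t + 2 := by
          simp only [List.length_append, List.length_replicate]; omega
        rw [hlen2]
        simp only [Nat.sub_self, List.replicate_zero, List.append_nil]
        obtain ⟨c', hc'⟩ := ih s hst' b'
        refine ⟨c', ?_⟩
        rw [take_append_replicate, ← hc', take_append_replicate]
        congr 2
        omega
      · -- no switch
        obtain ⟨c', hc'⟩ := ih s hst' c
        refine ⟨c', ?_⟩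
        rw [take_append_replicate, ← hc', take_append_replicate]
        congr 2
        omega
    · -- s = t + 1
      have hseq : s = t + 1 := by omega
      subst hseq
      refine ⟨c, ?_⟩
      apply List.take_of_length_le
      have := uz_length_le z (t + 1 + 1)
      simp only [List.length_append, List.length_replicate]
      omega

open Classical in
/-- the (at most two) canonical members of `Ap (pz z)` -/
noncomputable def xb (z : ℕ → Bool) (c : Bool) : Baire := fun i =>
  if h : ∃ t, i < (uz z t).length then
    (if (uz z (Nat.find h))[i]'(Nat.find_spec h) then 1 else 0)
  else (if c then 1 else 0)

lemma xb_le_one (z : ℕ → Bool) (c : Bool) (n : ℕ) : xb z c n ≤ 1 := by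
  classical
  unfold xb
  split <;> split <;> omega

lemma xb_absorbed {z : ℕ → Bool} {c : Bool} {i t : ℕ} (ht : i < (uz z t).length) :
    xb z c i = if (uz z t)[i] then 1 else 0 := by
  classical
  have h : ∃ t, i < (uz z t).length := ⟨t, ht⟩
  unfold xb
  rw [dif_pos h]
  rw [uz_getElem_eq (Nat.find_spec h) ht]

lemma xb_free {z : ℕ → Bool} {c : Bool} {i : ℕ} (hi : ¬∃ t, i < (uz z t).length) :
    xb z c i = if c then 1 else 0 := by
  classical
  unfold xb
  rw [dif_neg hi]

lemma decide_xb (z : ℕ → Bool) (c : Bool) (i : ℕ) {b : Bool}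
    (h : xb z c i = if b then 1 else 0) : decide (xb z c i = 1) = b := by
  cases b <;> simp [h]

lemma xb_mem_Ap (z : ℕ → Bool) (c : Bool) : xb z c ∈ Ap (pz z) := by
  classical
  rw [mem_Ap_pz]
  refine ⟨xb_le_one z c, fun s => ?_⟩
  -- choose a large stage T
  set T : ℕ := s + (Finset.range (s + 1)).sup
    (fun i => if h : ∃ t, i < (uz z t).length then Nat.find h else 0) with hT
  have hTs : s ≤ T := by omega
  have habs : ∀ i ≤ s, (∃ t, i < (uz z t).length) → i < (uz z (T + 1)).length := by
    intro i hi h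
    have h1 : Nat.find h ≤ T := by
      have hmem : i ∈ Finset.range (s + 1) := Finset.mem_range.2 (by omega)
      have : (if h : ∃ t, i < (uz z t).length then Nat.find h else 0) ≤
          (Finset.range (s + 1)).sup
            (fun i => if h : ∃ t, i < (uz z t).length then Nat.find h else 0) :=
        Finset.le_sup (f := fun i => if h : ∃ t, i < (uz z t).length then Nat.find h else 0) hmem
      rw [dif_pos h] at this
      omega
    exact lt_of_lt_of_le (Nat.find_spec h)
      (List.IsPrefix.length_le (uz_prefix z (show Nat.find h ≤ T + 1 by omega)))
  -- prefix of xb equals truncation of big candidate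
  have hkey : prefixList (xb z c) (s + 1) = List.take (s + 1)
      (uz z (T + 1) ++ List.replicate (T + 1 - (uz z (T + 1)).length) c) := by
    have hLT := uz_length_le z (T + 1)
    have hlen1 : (prefixList (xb z c) (s + 1)).length = s + 1 := by simp [prefixList]
    have hlen2 : (List.take (s + 1) (uz z (T + 1) ++
        List.replicate (T + 1 - (uz z (T + 1)).length) c)).length = s + 1 := by
      simp only [List.length_take, List.length_append, List.length_replicate]
      omega
    refine List.ext_getElem (by rw [hlen1, hlen2]) (fun i h1 h2 => ?_)
    rw [hlen1] at h1
    have hgl : (prefixList (xb z c) (s + 1))[i]'(by rw [hlen1]; exact h1) =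
        decide (xb z c i = 1) := prefixList_getElem _ h1
    rw [hgl, List.getElem_take]
    rcases Nat.lt_or_ge i (uz z (T + 1)).length with hil | hil
    · rw [List.getElem_append_left hil]
      exact decide_xb z c i (xb_absorbed hil)
    · rw [List.getElem_append_right hil]
      rw [List.getElem_replicate]
      have hfree : ¬∃ t, i < (uz z t).length := by
        intro h
        exact absurd (habs i (by omega) h) (by omega)
      exact decide_xb z c i (xb_free hfree)
  obtain ⟨c', hc'⟩ := compat z T s hTs c
  rw [hkey, hc']
  cases c'
  · exact Or.inl rfl
  · exact Or.inr rfl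

/-- every member of `Ap (pz z)` is canonical -/
lemma Ap_pz_subset (z : ℕ → Bool) : Ap (pz z) ⊆ {xb z false, xb z true} := by
  classical
  intro x hx
  rw [mem_Ap_pz] at hx
  obtain ⟨hle, hcand⟩ := hx
  -- decoded values
  have hval : ∀ s, ∃ c : Bool, ∀ i (hi : i < s + 1),
      decide (x i = 1) = (cand z s c)[i]'(by rw [cand_length]; omega) := by
    intro s
    rcases hcand s with h | h
    · exact ⟨false, fun i hi => by
        rw [← prefixList_getElem x hi]
        exact List.getElem_of_eq h _⟩
    · exact ⟨true, fun i hi => by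
        rw [← prefixList_getElem x hi]
        exact List.getElem_of_eq h _⟩
  -- absorbed positions are determined
  have habs : ∀ i t (hit : i < (uz z t).length), x i = if (uz z t)[i]'hit then 1 else 0 := by
    intro i t hit
    have hit1 : i < (uz z (t + 1)).length :=
      lt_of_lt_of_le hit (uz_prefix z (by omega)).length_le
    have hts : i < t + 1 := lt_of_lt_of_le hit1 (uz_length_le z (t + 1))
    obtain ⟨c, hc⟩ := hval t
    have h1 := hc i hts
    have h2 : (cand z t c)[i]'(by rw [cand_length]; omega) = (uz z t)[i]'hit := by
      simp only [cand]
      rw [List.getElem_append_left hit1]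
      exact uz_getElem_eq hit1 hit
    rw [h2] at h1
    have hxi := hle i
    rcases Bool.eq_false_or_eq_true ((uz z t)[i]'hit) with hb | hb <;> rw [hb] at h1 ⊢
    · simp only [decide_eq_true_eq] at h1
      simpa using h1
    · simp only [decide_eq_false_iff_not] at h1
      have hz0 : x i = 0 := by omega
      simpa using hz0
  -- main case split
  by_cases hf : ∃ i, ¬∃ t, i < (uz z t).length
  · obtain ⟨i₀, hi₀⟩ := hf
    set c : Bool := decide (x i₀ = 1) with hc
    have hxeq : x = xb z c := by
      funext i
      by_cases h : ∃ t, i < (uz z t).length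
      · obtain ⟨t, ht⟩ := h
        rw [xb_absorbed ht]
        exact habs i t ht
      · -- i free; show x i = x i₀ using stage max i i₀
        rw [xb_free h]
        set s : ℕ := max i i₀ with hs
        obtain ⟨cs, hcs⟩ := hval s
        have hLs : (uz z (s + 1)).length ≤ i := by
          by_contra hcon
          exact h ⟨s + 1, by omega⟩
        have hLs0 : (uz z (s + 1)).length ≤ i₀ := by
          by_contra hcon
          exact hi₀ ⟨s + 1, by omega⟩
        have e1 := hcs i (by omega)
        have e2 := hcs i₀ (by omega)
        have g1 : (cand z s cs)[i]'(by rw [cand_length]; omega) = cs := by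
          simp only [cand]
          rw [List.getElem_append_right hLs, List.getElem_replicate]
        have g2 : (cand z s cs)[i₀]'(by rw [cand_length]; omega) = cs := by
          simp only [cand]
          rw [List.getElem_append_right hLs0, List.getElem_replicate]
        rw [g1] at e1
        rw [g2] at e2
        have : decide (x i = 1) = decide (x i₀ = 1) := by rw [e1, e2]
        have hx1 := hle i
        have hx2 := hle i₀
        rw [← hc] at this
        cases hcv : c <;> rw [hcv] at this <;> simp at this <;> simp [hcv] <;> omega
    rw [hxeq]
    cases hcv : c
    · exact Or.inl rfl
    · exact Or.inr rfl
  · push_neg at hf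
    have hxeq : x = xb z false := by
      funext i
      obtain ⟨t, ht⟩ := hf i
      rw [xb_absorbed ht]
      exact habs i t ht
    exact Or.inl hxeq


-- ============ pz facts ============

lemma pz_mem_dom (z : ℕ → Bool) : pz z ∈ Cle2.dom := by
  refine ⟨⟨xb z false, xb_mem_Ap z false⟩, ?_⟩
  calc (Ap (pz z)).encard ≤ ({xb z false, xb z true} : Set Baire).encard :=
        Set.encard_le_encard (Ap_pz_subset z)
    _ ≤ ({xb z true} : Set Baire).encard + 1 := Set.encard_insert_le _ _
    _ ≤ 2 := by rw [Set.encard_singleton]; norm_num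

lemma continuous_pz : Continuous pz := by
  apply continuous_pi
  intro n
  apply continuous_determined
  intro z
  refine ⟨2 * (n.unpair.1 + 1), fun y hy => ?_⟩
  have huz : uz y (n.unpair.1 + 1) = uz z (n.unpair.1 + 1) := uz_local _ hy
  unfold pz cand
  rw [huz]

-- ============ main theorem D ============

theorem not_wred_Cle2_CNat : ¬ WRed Cle2 CNat := by
  rintro ⟨Kd, Hd, K, H, hK, hH, hred⟩
  classical
  have hKd : ∀ z : ℕ → Bool, pz z ∈ Kd := fun z => (hred _ (pz_mem_dom z)).1
  have hGcont : Continuous (fun z => K (pz z)) := hK.comp_continuous continuous_pz hKd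
  set D : ℕ → Set (ℕ → Bool) := fun i => {z | i ∉ rangeM (K (pz z))} with hD
  have hDclosed : ∀ i, IsClosed (D i) := by
    intro i
    have hopen : IsOpen {p : Baire | i ∈ rangeM p} := by
      have : {p : Baire | i ∈ rangeM p} = ⋃ m, {p : Baire | p m = i + 1} := by
        ext p; simp [rangeM]
      rw [this]
      refine isOpen_iUnion (fun m => isOpen_determined (m + 1) (fun x hx y hy => ?_))
      simp only [Set.mem_setOf_eq] at hx ⊢
      rw [hy m (by omega), hx]
    have : D i = (fun z => K (pz z)) ⁻¹' {p : Baire | i ∈ rangeM p}ᶜ := rfl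
    rw [this]
    exact IsClosed.preimage hGcont hopen.isClosed_compl
  have hcover : ⋃ i, D i = Set.univ := by
    ext z
    simp only [Set.mem_iUnion, Set.mem_univ, iff_true]
    exact (hred _ (pz_mem_dom z)).2.1
  obtain ⟨i, hint⟩ := nonempty_interior_of_iUnion_of_closed hDclosed hcover
  obtain ⟨z₀, hz₀⟩ := hint
  obtain ⟨k, hcyl⟩ := exists_cylinder isOpen_interior hz₀
  set cyl : Set (ℕ → Bool) := {z | ∀ j < k, z j = z₀ j} with hcylset
  have hcylD : ∀ z ∈ cyl, i ∉ rangeM (K (pz z)) := fun z hz => interior_subset (hcyl z hz)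
  set h : (ℕ → Bool) → Baire := fun z => H (pairB (pz z) (constSeq i)) with hh
  have hsolcyl : ∀ z ∈ cyl, pairB (pz z) (constSeq i) ∈ Hd ∧ h z ∈ Ap (pz z) := by
    intro z hz
    exact (hred (pz z) (pz_mem_dom z)).2.2 (constSeq i) ⟨i, hcylD z hz, rfl⟩
  have hmcont : Continuous (fun z => pairB (pz z) (constSeq i)) := by
    apply continuous_pi
    intro n
    by_cases hn : n % 2 = 0
    · simpa [pairB, hn, Function.comp_def] using (continuous_apply (n / 2)).comp continuous_pz
    · simpa [pairB, hn] using continuous_const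
  have hhcont : ContinuousOn h cyl :=
    hH.comp hmcont.continuousOn (fun z hz => (hsolcyl z hz).1)
  -- the no-more-switches point
  set zs : ℕ → Bool := fun j => if j < k then z₀ j else false with hzs
  have hzscyl : zs ∈ cyl := fun j hj => if_pos hj
  set U : List Bool := uz zs (k + 1) with hU
  have hstab : ∀ t, k + 1 ≤ t → uz zs t = U := by
    intro t ht
    induction t with
    | zero => omega
    | succ t ih =>
      rcases Nat.lt_or_ge t (k + 1) with h' | h'
      · rw [show t + 1 = k + 1 by omega]
      · have h1 := ih (by omega)
        rw [show uz zs (t + 1) = if zs (2 * t) then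
            uz zs t ++ List.replicate (t + 1 - (uz zs t).length) (!(zs (2 * t + 1)))
          else uz zs t from rfl]
        have hf : zs (2 * t) = false := if_neg (by omega)
        rw [hf]
        simpa using h1
  have hUlen : U.length ≤ k + 1 := uz_length_le zs (k + 1)
  obtain ⟨k', hk'⟩ := continuousOn_modulus hhcont hzscyl (U.length + 1)
  set T : ℕ := k + k' + U.length + 1 with hT
  set bb : Bool := decide (h zs U.length = 1) with hbb
  set z' : ℕ → Bool := Function.update (Function.update zs (2 * T) true) (2 * T + 1) bb
    with hz'
  have hz'agree : ∀ j < 2 * T, z' j = zs j := by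
    intro j hj
    rw [hz', Function.update_of_ne (by omega), Function.update_of_ne (by omega)]
  have hz'cyl : z' ∈ cyl := fun j hj => by
    rw [hz'agree j (by omega)]; exact hzscyl j hj
  have huT : uz z' T = U := by
    have := uz_local (z := z') (z' := zs) T (fun j hj => hz'agree j hj)
    rw [this]
    exact hstab T (by omega)
  have he1 : z' (2 * T) = true := by
    rw [hz', Function.update_of_ne (by omega)]
    exact Function.update_self _ _ _
  have he2 : z' (2 * T + 1) = bb := by
    rw [hz']
    exact Function.update_self _ _ _
  have hswitch : uz z' (T + 1) = U ++ List.replicate (T + 1 - U.length) (!bb) := by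
    rw [show uz z' (T + 1) = if z' (2 * T) then
        uz z' T ++ List.replicate (T + 1 - (uz z' T).length) (!(z' (2 * T + 1)))
      else uz z' T from rfl, he1, he2, huT]
    simp only [if_true]
  have hlenT : (uz z' (T + 1)).length = T + 1 := by
    rw [hswitch]
    simp only [List.length_append, List.length_replicate]
    omega
  have hz'A : h z' ∈ Ap (pz z') := (hsolcyl z' hz'cyl).2
  rw [mem_Ap_pz] at hz'A
  have hfill : T + 1 - (uz z' (T + 1)).length = 0 := by omega
  have hpre : prefixList (h z') (T + 1) = uz z' (T + 1) := by
    rcases hz'A.2 T with hc | hc <;> rw [hc] <;> simp [cand, hfill]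
  -- evaluate at position U.length
  have hUlt : U.length < T + 1 := by omega
  have hlhs : (prefixList (h z') (T + 1))[U.length]'(by simp [prefixList]; omega) =
      decide (h z' U.length = 1) := prefixList_getElem _ hUlt
  have hmodeq : h z' U.length = h zs U.length :=
    hk' z' hz'cyl (fun j hj => hz'agree j (by omega)) U.length (by omega)
  have hpf2 : U.length < (uz z' (T + 1)).length := by rw [hlenT]; omega
  have g0 : (prefixList (h z') (T + 1))[U.length]'(by simp [prefixList]; omega) =
      decide (h z' U.length = 1) := prefixList_getElem _ hUlt
  have g1 : (prefixList (h z') (T + 1))[U.length]'(by simp [prefixList]; omega) =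
      (uz z' (T + 1))[U.length]'hpf2 :=
    List.getElem_of_eq hpre _
  rw [g1] at g0
  have g2 : (uz z' (T + 1))[U.length]'hpf2 = !bb := by
    have g3 := List.getElem_of_eq hswitch hpf2
    rw [g3, List.getElem_append_right (le_refl _), List.getElem_replicate]
  rw [g2] at g0
  rw [hmodeq] at g0
  rw [← hbb] at g0
  exact absurd g0.symm (by cases bb <;> simp)

/-- `C₂ <_W C_{#≤2}`, `C_{#≤2} ≰_W C_ℕ`, and `C₃ ≰_W C_{#≤2}`. -/
theorem Cle2_position : WLt (Cfin 2) Cle2 ∧ ¬ WRed Cle2 CNat ∧ ¬ WRed (Cfin 3) Cle2 := by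
  refine ⟨⟨wred_C2_Cle2, fun hred => ?_⟩, not_wred_Cle2_CNat, not_wred_C3_Cle2⟩
  exact not_wred_Cle2_CNat (wred_trans hred wred_C2_CNat)
end

section
/- The decimal representation continuously reduces to the Cauchy representation but not conversely: there is a partial function F :⊆ ℕ^ℕ → ℕ^ℕ, continuous on its domain, with ρ(F(p)) = ρ_10(p) for all p ∈ dom(ρ_10), but there is no partial function G, continuous on its domain, with ρ_10(G(p)) = ρ(p) for all p ∈ dom(ρ). Moreover, addition is not continuously realizable with respect to the decimal representation: there is no partial function H :⊆ ℕ^ℕ → ℕ^ℕ, continuous on its domain, such that ρ_10(H⟨p,q⟩) = ρ_10(p) + ρ_10(q) for all p, q ∈ dom(ρ_10). -/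
open Filter Topology

def ratIdx (r : ℚ) : ℕ := Nat.pair r.num.toNat (Nat.pair (-r.num).toNat (r.den - 1))

lemma ratEnum_ratIdx (r : ℚ) : ratEnum (ratIdx r) = r := by
  unfold ratEnum ratIdx
  simp only [Nat.unpair_pair]
  have h1 : (r.num.toNat : ℤ) - ((-r.num).toNat : ℤ) = r.num := by omega
  have hn : (r.num.toNat : ℚ) - ((-r.num).toNat : ℚ) = (r.num : ℚ) := by
    exact_mod_cast congrArg (fun z : ℤ => (z : ℚ)) h1
  have hd : ((r.den - 1 : ℕ) : ℚ) + 1 = (r.den : ℚ) := by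
    have := r.pos
    push_cast [Nat.cast_sub (by omega : 1 ≤ r.den)]
    ring
  rw [hn, hd, Rat.num_div_den]

lemma continuous_of_local (F : Baire → Baire) (m : ℕ → ℕ)
    (h : ∀ n p p', (∀ i < m n, p i = p' i) → F p n = F p' n) : Continuous F := by
  apply continuous_pi
  intro n
  have heq : (fun p => F p n) =
      (fun v : Fin (m n) → ℕ => F (fun i => if hi : i < m n then v ⟨i, hi⟩ else 0) n) ∘
        (fun p (i : Fin (m n)) => p i) := by
    funext p
    exact h n p _ (fun i hi => by simp [hi])
  rw [heq]
  exact (continuous_of_discreteTopology).comp (continuous_pi fun i => continuous_apply _)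

lemma summable_c_div (c : ℝ) : Summable (fun n : ℕ => c / 10 ^ (n+1)) := by
  have h : (fun n : ℕ => c / 10 ^ (n+1)) = fun n => (c/10) * (1/10:ℝ)^n := by
    funext n; rw [pow_succ, div_eq_mul_inv, div_eq_mul_inv, mul_inv, one_div, inv_pow]; ring
  rw [h]
  exact (summable_geometric_of_lt_one (by norm_num) (by norm_num)).mul_left _

lemma tsum_c_div (c : ℝ) : ∑' n : ℕ, c / 10 ^ (n+1) = c / 9 := by
  have h : (fun n : ℕ => c / 10 ^ (n+1)) = fun n => (c/10) * (1/10:ℝ)^n := by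
    funext n; rw [pow_succ, div_eq_mul_inv, div_eq_mul_inv, mul_inv, one_div, inv_pow]; ring
  rw [h, tsum_mul_left, tsum_geometric_of_lt_one (by norm_num) (by norm_num)]
  ring

lemma coord_eventually {Hd : Set Baire} {H : Baire → Baire} (hc : ContinuousOn H Hd)
    {r : Baire} (hr : r ∈ Hd) {s : ℕ → Baire} (hs : ∀ m, s m ∈ Hd)
    (hlim : Tendsto s atTop (nhds r)) : ∀ᶠ m in atTop, H (s m) 0 = H r 0 := by
  have h1 : Tendsto (fun m => H (s m)) atTop (nhds (H r)) :=
    (hc r hr).tendsto.comp (tendsto_nhdsWithin_iff.mpr ⟨hlim, Eventually.of_forall hs⟩)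
  have h2 : Tendsto (fun m => H (s m) 0) atTop (nhds (H r 0)) :=
    ((continuous_apply 0).tendsto _).comp h1
  rwa [nhds_discrete, tendsto_pure] at h2

lemma tendsto_of_eventually_eq {s : ℕ → Baire} {r : Baire}
    (h : ∀ i m, i < m → s m i = r i) : Tendsto s atTop (nhds r) := by
  rw [tendsto_pi_nhds]
  intro i
  apply Tendsto.congr' _ (tendsto_const_nhds (x := r i))
  filter_upwards [eventually_gt_atTop i] with m hm using (h i m hm).symm

lemma two_zpow (n : ℕ) : (2:ℝ) ^ (-(n:ℤ)) = ((2:ℝ)^n)⁻¹ := by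
  rw [zpow_neg, zpow_natCast]

lemma summable_digits {p : Baire} (hd : ∀ n, 1 ≤ n → p n ≤ 9) :
    Summable (fun n : ℕ => (p (n+1) : ℝ) / 10 ^ (n+1)) := by
  apply Summable.of_nonneg_of_le (fun n => by positivity) (fun n => ?_) (summable_c_div 9)
  gcongr
  exact_mod_cast hd (n+1) (by omega)

lemma rhoDec_bounds {p : Baire} {x : ℝ} (h : rhoDec p x) :
    ((Denumerable.ofNat ℤ (p 0) : ℤ) : ℝ) ≤ x ∧
      x ≤ ((Denumerable.ofNat ℤ (p 0) : ℤ) : ℝ) + 1 := by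
  obtain ⟨hdig, hx⟩ := h
  have hsum := summable_digits hdig
  have h0 : (0:ℝ) ≤ ∑' n : ℕ, (p (n+1) : ℝ) / 10 ^ (n+1) :=
    tsum_nonneg (fun n => by positivity)
  have h1 : ∑' n : ℕ, (p (n+1) : ℝ) / 10 ^ (n+1) ≤ ∑' n : ℕ, (9:ℝ) / 10 ^ (n+1) := by
    apply Summable.tsum_le_tsum (fun n => ?_) hsum (summable_c_div 9)
    gcongr
    exact_mod_cast hdig (n+1) (by omega)
  rw [tsum_c_div] at h1
  constructor <;> [skip; skip] <;> rw [hx] <;> linarith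

-- Part 1: the forward reduction
noncomputable def Fdec (p : Baire) : Baire := fun n =>
  ratIdx ((Denumerable.ofNat ℤ (p 0) : ℤ) + ∑ i ∈ Finset.range n, (p (i+1) : ℚ) / 10 ^ (i+1))

lemma Fdec_continuous : Continuous Fdec := by
  apply continuous_of_local Fdec (fun n => n + 1)
  intro n p p' h
  unfold Fdec
  congr 1
  rw [h 0 (by omega)]
  congr 1
  apply Finset.sum_congr rfl
  intro i hi
  rw [h (i+1) (by simpa using Finset.mem_range.mp hi)]

set_option maxHeartbeats 1000000 in
lemma Fdec_correct {p : Baire} {x : ℝ} (h : rhoDec p x) : rhoCauchy (Fdec p) x := by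
  obtain ⟨hdig, hx⟩ := h
  have hsum := summable_digits hdig
  intro n
  have he : ((ratEnum (Fdec p n) : ℚ) : ℝ) =
      ((Denumerable.ofNat ℤ (p 0) : ℤ) : ℝ) +
        ∑ i ∈ Finset.range n, (p (i+1) : ℝ) / 10 ^ (i+1) := by
    unfold Fdec
    rw [ratEnum_ratIdx]
    push_cast
    ring
  have htail := (Summable.sum_add_tsum_nat_add (f := fun i => (p (i+1) : ℝ) / 10 ^ (i+1)) n hsum)
  have htl0 : (0:ℝ) ≤ ∑' i : ℕ, (p (i+n+1) : ℝ) / 10 ^ (i+n+1) :=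
    tsum_nonneg (fun i => by positivity)
  have htl1 : ∑' i : ℕ, (p (i+n+1) : ℝ) / 10 ^ (i+n+1) ≤ 1/10^n := by
    have : ∑' i : ℕ, (p (i+n+1) : ℝ) / 10 ^ (i+n+1) ≤
        ∑' i : ℕ, ((9:ℝ)/10^n) / 10 ^ (i+1) := by
      apply Summable.tsum_le_tsum (fun i => ?_) ((summable_nat_add_iff (f := fun i => (p (i+1) : ℝ) / 10 ^ (i+1)) n).mpr hsum) (summable_c_div _)
      rw [div_div, ← pow_add]
      have hexp : n + (i + 1) = i + n + 1 := by ring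
      rw [hexp]
      gcongr
      exact_mod_cast hdig (i+n+1) (by omega)
    rw [tsum_c_div] at this
    have h9 : (9:ℝ)/10^n/9 = 1/10^n := by ring
    linarith [this]
  have hxq : x - ((ratEnum (Fdec p n) : ℚ) : ℝ) =
      ∑' i : ℕ, (p (i+n+1) : ℝ) / 10 ^ (i+n+1) := by
    rw [he, hx]
    have : ∀ i : ℕ, (p (i+n+1) : ℝ) / 10 ^ (i+n+1) = (p ((i+n)+1) : ℝ) / 10 ^ ((i+n)+1) := by
      intro i; norm_num
    rw [tsum_congr this]
    linarith [htail]
  have h2 : (1:ℝ)/10^n ≤ (2:ℝ) ^ (-(n:ℤ)) := by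
    rw [two_zpow, one_div]
    gcongr <;> norm_num
  rw [abs_sub_comm, abs_of_nonneg (by linarith [hxq ▸ htl0])]
  linarith [hxq ▸ htl1]

-- Part 2 ingredients
noncomputable def pertC (e : ℚ) (m : ℕ) : Baire := fun n => if n < m then ratIdx 0 else ratIdx e

lemma rhoCauchy_pertC (e : ℚ) (m : ℕ) (he : |(e : ℝ)| ≤ ((2:ℝ)^m)⁻¹) :
    rhoCauchy (pertC e m) (e : ℝ) := by
  intro n
  unfold pertC
  split_ifs with h
  · rw [ratEnum_ratIdx, two_zpow]
    push_cast
    rw [zero_sub, abs_neg]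
    have h2 : (2:ℝ)^n ≤ 2^m := by
      apply pow_le_pow_right₀ (by norm_num) (by omega)
    exact le_trans he (inv_anti₀ (by positivity) h2)
  · rw [ratEnum_ratIdx, sub_self, abs_zero]
    positivity

-- Part 3 ingredients
def z0 : ℕ := Encodable.encode (0:ℤ)

lemma ofNat_z0 : Denumerable.ofNat ℤ z0 = 0 := Denumerable.ofNat_encode 0

def decC (d : ℕ) : Baire := fun n => if n = 0 then z0 else d

def decP (d m : ℕ) : Baire := fun n => if n = 0 then z0 else if n ≤ m then 3 else d

lemma rhoDec_decC {d : ℕ} (hd : d ≤ 9) : rhoDec (decC d) ((d:ℝ)/9) := by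
  constructor
  · intro n hn
    simp only [decC, if_neg (by omega : ¬ n = 0)]
    exact hd
  · have h1 : ∀ n : ℕ, ((decC d (n+1) : ℕ) : ℝ) / 10^(n+1) = (d:ℝ)/10^(n+1) := by
      intro n; simp [decC]
    rw [tsum_congr h1, tsum_c_div]
    simp [decC, ofNat_z0]; exact ofNat_z0

noncomputable def decPval (d m : ℕ) : ℝ := ∑' n : ℕ, ((decP d m (n+1) : ℕ) : ℝ) / 10^(n+1)

lemma rhoDec_decP {d : ℕ} (hd : d ≤ 9) (m : ℕ) : rhoDec (decP d m) (decPval d m) := by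
  constructor
  · intro n hn
    simp only [decP, if_neg (by omega : ¬ n = 0)]
    split_ifs <;> omega
  · rw [decPval]
    simp [decP, ofNat_z0]; exact ofNat_z0

lemma summable_decP (d : ℕ) (hd : d ≤ 9) (m : ℕ) :
    Summable (fun n : ℕ => ((decP d m (n+1) : ℕ) : ℝ) / 10^(n+1)) :=
  summable_digits (fun n hn => by
    simp only [decP, if_neg (by omega : ¬ n = 0)]
    split_ifs <;> omega)

lemma decP_top (d m : ℕ) : decP d m (m+1) = d := by
  simp only [decP, if_neg (Nat.succ_ne_zero m), if_neg (by omega : ¬ m+1 ≤ m)]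

lemma decPval_lt (m : ℕ) : decPval 2 m < 1/3 := by
  have h3 : (1:ℝ)/3 = ∑' n : ℕ, (3:ℝ)/10^(n+1) := by rw [tsum_c_div]; norm_num
  rw [h3, decPval]
  have hi : ((decP 2 m (m+1) : ℕ):ℝ) / 10^(m+1) < 3/10^(m+1) := by
    rw [decP_top]
    gcongr <;> norm_num
  refine Summable.tsum_lt_tsum (fun n => ?_) hi (summable_decP 2 (by norm_num) m) (summable_c_div 3)
  gcongr
  simp only [decP, if_neg (Nat.succ_ne_zero n)]
  split_ifs <;> norm_num

lemma decPval_gt (m : ℕ) : 1/3 < decPval 4 m := by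
  have h3 : (1:ℝ)/3 = ∑' n : ℕ, (3:ℝ)/10^(n+1) := by rw [tsum_c_div]; norm_num
  rw [h3, decPval]
  have hi : (3:ℝ)/10^(m+1) < ((decP 4 m (m+1) : ℕ):ℝ) / 10^(m+1) := by
    rw [decP_top]
    gcongr <;> norm_num
  refine Summable.tsum_lt_tsum (fun n => ?_) hi (summable_c_div 3) (summable_decP 4 (by norm_num) m)
  gcongr
  simp only [decP, if_neg (Nat.succ_ne_zero n)]
  split_ifs <;> norm_num

/-- The decimal representation continuously reduces to the Cauchy representation but not
conversely, and addition is not continuously realizable w.r.t. the decimal representation. -/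
theorem decimal_vs_cauchy :
    (∃ (Fd : Set Baire) (F : Baire → Baire), ContinuousOn F Fd ∧
      ∀ p x, rhoDec p x → p ∈ Fd ∧ rhoCauchy (F p) x) ∧
    (¬ ∃ (Gd : Set Baire) (G : Baire → Baire), ContinuousOn G Gd ∧
      ∀ p x, rhoCauchy p x → p ∈ Gd ∧ rhoDec (G p) x) ∧
    (¬ ∃ (Hd : Set Baire) (H : Baire → Baire), ContinuousOn H Hd ∧
      ∀ p q x y, rhoDec p x → rhoDec q y →
        pairB p q ∈ Hd ∧ rhoDec (H (pairB p q)) (x + y)) := by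
  refine ⟨⟨Set.univ, Fdec, Fdec_continuous.continuousOn, fun p x h => ⟨trivial, Fdec_correct h⟩⟩,
    ?_, ?_⟩
  · rintro ⟨Gd, G, hGc, hG⟩
    have hp0 : rhoCauchy (fun _ => ratIdx 0) 0 := by
      intro n
      rw [ratEnum_ratIdx]
      simp only [Rat.cast_zero, sub_zero, abs_zero]
      positivity
    obtain ⟨hp0d, hGp0⟩ := hG _ 0 hp0
    rcases le_or_gt 0 (Denumerable.ofNat ℤ (G (fun _ => ratIdx 0) 0) : ℤ) with ha | ha
    · -- negative perturbations
      have habs : ∀ m : ℕ, |(((-(1/2^(m+1)) : ℚ)) : ℝ)| ≤ ((2:ℝ)^m)⁻¹ := by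
        intro m
        push_cast
        rw [abs_neg, abs_of_nonneg (by positivity), one_div]
        exact inv_anti₀ (by positivity) (pow_le_pow_right₀ (by norm_num) (by omega))
      have hsc : ∀ m : ℕ, rhoCauchy (pertC (-(1/2^(m+1))) m) (((-(1/2^(m+1)) : ℚ)) : ℝ) :=
        fun m => rhoCauchy_pertC _ _ (habs m)
      have hsd : ∀ m, pertC (-(1/2^(m+1))) m ∈ Gd := fun m => (hG _ _ (hsc m)).1
      have hlim : Tendsto (fun m => pertC (-(1/2^(m+1))) m) atTop
          (nhds (fun _ => ratIdx 0)) := by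
        apply tendsto_of_eventually_eq
        intro i m him
        simp [pertC, if_pos him]
      obtain ⟨m, hm⟩ := (coord_eventually hGc hp0d hsd hlim).exists
      have hb := (rhoDec_bounds (hG _ _ (hsc m)).2).1
      rw [hm] at hb
      have h1 : (((-(1/2^(m+1)) : ℚ)) : ℝ) < 0 := by
        push_cast
        have : (0:ℝ) < 1/2^(m+1) := by positivity
        linarith
      have h2 : (0:ℝ) ≤ ((Denumerable.ofNat ℤ (G (fun _ => ratIdx 0) 0) : ℤ) : ℝ) := by
        exact_mod_cast ha
      linarith
    · -- positive perturbations
      have habs : ∀ m : ℕ, |(((1/2^(m+1) : ℚ)) : ℝ)| ≤ ((2:ℝ)^m)⁻¹ := by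
        intro m
        push_cast
        rw [abs_of_nonneg (by positivity), one_div]
        exact inv_anti₀ (by positivity) (pow_le_pow_right₀ (by norm_num) (by omega))
      have hsc : ∀ m : ℕ, rhoCauchy (pertC (1/2^(m+1)) m) (((1/2^(m+1) : ℚ)) : ℝ) :=
        fun m => rhoCauchy_pertC _ _ (habs m)
      have hsd : ∀ m, pertC (1/2^(m+1)) m ∈ Gd := fun m => (hG _ _ (hsc m)).1
      have hlim : Tendsto (fun m => pertC (1/2^(m+1)) m) atTop
          (nhds (fun _ => ratIdx 0)) := by
        apply tendsto_of_eventually_eq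
        intro i m him
        simp [pertC, if_pos him]
      obtain ⟨m, hm⟩ := (coord_eventually hGc hp0d hsd hlim).exists
      have hb := (rhoDec_bounds (hG _ _ (hsc m)).2).2
      rw [hm] at hb
      have h1 : (0:ℝ) < (((1/2^(m+1) : ℚ)) : ℝ) := by
        push_cast
        positivity
      have h2 : ((Denumerable.ofNat ℤ (G (fun _ => ratIdx 0) 0) : ℤ) : ℝ) ≤ -1 := by
        exact_mod_cast (by omega : (Denumerable.ofNat ℤ (G (fun _ => ratIdx 0) 0) : ℤ) ≤ -1)
      linarith
  · rintro ⟨Hd, H, hHc, hH⟩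
    obtain ⟨hrd, hHr⟩ := hH (decC 3) (decC 6) _ _
      (rhoDec_decC (by norm_num)) (rhoDec_decC (by norm_num))
    have key : ∀ d : ℕ, d ≤ 9 → ∃ m : ℕ,
        H (pairB (decP d m) (decC 6)) 0 = H (pairB (decC 3) (decC 6)) 0 := by
      intro d hd
      have hsd : ∀ m, pairB (decP d m) (decC 6) ∈ Hd := fun m =>
        (hH _ _ _ _ (rhoDec_decP hd m) (rhoDec_decC (by norm_num))).1
      have hlim : Tendsto (fun m => pairB (decP d m) (decC 6)) atTop
          (nhds (pairB (decC 3) (decC 6))) := by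
        apply tendsto_of_eventually_eq
        intro i m him
        simp only [pairB]
        split_ifs with h
        · have hle : i/2 ≤ m := by omega
          simp only [decP, decC]
          by_cases h0 : i/2 = 0
          · rw [if_pos h0, if_pos h0]
          · rw [if_neg h0, if_neg h0, if_pos hle]
        · rfl
      exact (coord_eventually hHc hrd hsd hlim).exists
    rcases le_or_gt 1 (Denumerable.ofNat ℤ (H (pairB (decC 3) (decC 6)) 0) : ℤ) with ha | ha
    · obtain ⟨m, hm⟩ := key 2 (by norm_num)
      have hb := (rhoDec_bounds (hH _ _ _ _ (rhoDec_decP (by norm_num : (2:ℕ) ≤ 9) m)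
        (rhoDec_decC (by norm_num : (6:ℕ) ≤ 9))).2).1
      rw [hm] at hb
      have h1 := decPval_lt m
      have ha' : (1:ℝ) ≤ ((Denumerable.ofNat ℤ (H (pairB (decC 3) (decC 6)) 0) : ℤ) : ℝ) := by
        exact_mod_cast ha
      have h6 : ((6:ℕ):ℝ)/9 = 6/9 := by norm_num
      rw [h6] at hb
      linarith
    · obtain ⟨m, hm⟩ := key 4 (by norm_num)
      have hb := (rhoDec_bounds (hH _ _ _ _ (rhoDec_decP (by norm_num : (4:ℕ) ≤ 9) m)
        (rhoDec_decC (by norm_num : (6:ℕ) ≤ 9))).2).2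
      rw [hm] at hb
      have h1 := decPval_gt m
      have ha' : ((Denumerable.ofNat ℤ (H (pairB (decC 3) (decC 6)) 0) : ℤ) : ℝ) ≤ 0 := by
        exact_mod_cast (by omega : (Denumerable.ofNat ℤ (H (pairB (decC 3) (decC 6)) 0) : ℤ) ≤ 0)
      have h6 : ((6:ℕ):ℝ)/9 = 6/9 := by norm_num
      rw [h6] at hb
      linarith
end
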